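/- arXiv:1506.00163 — 3 statements merged into one kernel-verified Lean document; each statement's English description precedes it below -/
import Mathlib

section
/- Let μ be a nonnegative Borel measure on ℂⁿ and α > 0, p ≥ 1. If μ(ℂⁿ) < ∞ and f : ℂⁿ → ℂ is measurable with |f(w)| ≤ C e^{α|w|²/2} for all w, then ∫_{ℂⁿ} ( ∫_{ℂⁿ} |exp(α⟨z,w⟩)| |f(w)| e^{−α|w|² − α|z|²/2} dμ(w) )^p dV(z) ≤ C' μ(ℂⁿ)^{p} for a constant C' depending only on n, α, p and C. -/
open MeasureTheory
open scoped ComplexInnerProductSpace NNReal ENNReal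

noncomputable instance EuclideanSpace.Complex.measurableSpace (n : ℕ) :
    MeasurableSpace (EuclideanSpace ℂ (Fin n)) := borel _

instance EuclideanSpace.Complex.borelSpace (n : ℕ) :
    BorelSpace (EuclideanSpace ℂ (Fin n)) := ⟨rfl⟩

/-- Lebesgue measure on `ℂⁿ ≅ ℝ^{2n}`, transported to `EuclideanSpace ℂ (Fin n)`. -/
noncomputable instance EuclideanSpace.Complex.measureSpace (n : ℕ) :
    MeasureSpace (EuclideanSpace ℂ (Fin n)) :=
  ⟨Measure.map
    ((PiLp.continuousLinearEquiv 2 ℂ (fun _ : Fin n => ℂ)).symm.toHomeomorph.toMeasurableEquiv)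
    volume⟩

/-! ### Auxiliary material -/

/-- The canonical continuous linear equivalence `(Fin n → ℂ) ≃L[ℂ] EuclideanSpace ℂ (Fin n)`. -/
noncomputable def ecle (n : ℕ) : (Fin n → ℂ) ≃L[ℂ] EuclideanSpace ℂ (Fin n) :=
  (PiLp.continuousLinearEquiv 2 ℂ (fun _ : Fin n => ℂ)).symm

lemma euclideanComplex_volume_eq_map (n : ℕ) :
    (volume : Measure (EuclideanSpace ℂ (Fin n))) = Measure.map (ecle n) volume := rfl

instance euclideanComplex_isAddHaar (n : ℕ) :
    (volume : Measure (EuclideanSpace ℂ (Fin n))).IsAddHaarMeasure := by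
  rw [euclideanComplex_volume_eq_map n]
  infer_instance

lemma ecle_measurePreserving (n : ℕ) :
    MeasurePreserving (ecle n) volume volume :=
  ⟨(ecle n).continuous.measurable, (euclideanComplex_volume_eq_map n).symm⟩

lemma integrable_gaussian_complex {c : ℝ} (hc : 0 < c) :
    Integrable (fun z : ℂ => Real.exp (-c * ‖z‖ ^ 2)) := by
  have h := (GaussianFourier.integrable_cexp_neg_mul_sq_norm_add (V := ℂ) (b := (c : ℂ))
    (by simpa using hc) 0 0).norm
  have : (fun z : ℂ => Real.exp (-c * ‖z‖ ^ 2)) =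
      fun v : ℂ => ‖Complex.exp (-(c : ℂ) * (‖v‖ : ℂ) ^ 2 + 0 * (inner ℝ (0 : ℂ) v : ℝ))‖ := by
    funext v
    simp only [Complex.norm_exp]
    congr 1
    simp [Complex.add_re, Complex.mul_re, ← Complex.ofReal_pow]
  rw [this]
  exact h

lemma integrable_gaussian_euclidean (n : ℕ) {c : ℝ} (hc : 0 < c) :
    Integrable (fun z : EuclideanSpace ℂ (Fin n) => Real.exp (-c * ‖z‖ ^ 2)) := by
  rw [← (ecle_measurePreserving n).integrable_comp_emb
    ((ecle n).toHomeomorph.measurableEmbedding)]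
  have hkey : (fun z : EuclideanSpace ℂ (Fin n) => Real.exp (-c * ‖z‖ ^ 2)) ∘ (ecle n) =
      fun x : Fin n → ℂ => ∏ i, Real.exp (-c * ‖x i‖ ^ 2) := by
    funext x
    simp only [Function.comp_apply, ← Real.exp_sum]
    congr 1
    have hnorm : ‖(ecle n) x‖ ^ 2 = ∑ i, ‖x i‖ ^ 2 := by
      rw [EuclideanSpace.norm_eq, Real.sq_sqrt (by positivity)]
      simp [ecle]
    rw [hnorm, Finset.mul_sum]
  rw [hkey]
  exact Integrable.fintype_prod (f := fun _ z => Real.exp (-c * ‖z‖ ^ 2))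
    (fun _ => integrable_gaussian_complex hc)

/-- A crude Jensen-type inequality for `[0,1]`-valued functions on a finite measure space. -/
lemma jensen_aux {X : Type*} [MeasurableSpace X] (μ : Measure X) [IsFiniteMeasure μ]
    {p : ℝ} (hp : 1 ≤ p) {g : X → ℝ} (hgm : Measurable g)
    (hg0 : ∀ x, 0 ≤ g x) (hg1 : ∀ x, g x ≤ 1) :
    (∫ x, g x ∂μ) ^ p ≤ (μ Set.univ).toReal ^ (p - 1) * ∫ x, g x ^ p ∂μ := by
  rcases eq_or_lt_of_le hp with hp1 | hp1
  · rw [← hp1]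
    simp [Real.rpow_one]
  · set q : ℝ := p / (p - 1) with hq
    have hpq : p.HolderConjugate q := Real.HolderConjugate.conjExponent hp1
    have hb : ∀ᵐ x ∂μ, ‖g x‖ ≤ 1 :=
      Filter.Eventually.of_forall fun x => by
        rw [Real.norm_of_nonneg (hg0 x)]; exact hg1 x
    have hgtop : MemLp g ⊤ μ := memLp_top_of_bound hgm.aestronglyMeasurable 1 hb
    have hgp : MemLp g (ENNReal.ofReal p) μ := hgtop.mono_exponent le_top
    have h1 : MemLp (fun _ : X => (1 : ℝ)) (ENNReal.ofReal q) μ := memLp_const 1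
    have hH := integral_mul_le_Lp_mul_Lq_of_nonneg hpq
      (Filter.Eventually.of_forall hg0)
      (Filter.Eventually.of_forall fun _ => (zero_le_one : (0:ℝ) ≤ 1)) hgp h1
    simp only [mul_one, Real.one_rpow, integral_const, smul_eq_mul] at hH
    have h0g : 0 ≤ ∫ x, g x ∂μ := integral_nonneg hg0
    have h0gp : 0 ≤ ∫ x, g x ^ p ∂μ :=
      integral_nonneg fun x => Real.rpow_nonneg (hg0 x) p
    have hM0 : (0:ℝ) ≤ (μ Set.univ).toReal := ENNReal.toReal_nonneg
    have hstep : (∫ x, g x ∂μ) ^ p ≤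
        ((∫ x, g x ^ p ∂μ) ^ (1 / p) * (μ Set.univ).toReal ^ (1 / q)) ^ p :=
      Real.rpow_le_rpow h0g hH (by linarith)
    refine hstep.trans_eq ?_
    rw [Real.mul_rpow (Real.rpow_nonneg h0gp _) (Real.rpow_nonneg hM0 _),
      ← Real.rpow_mul h0gp, ← Real.rpow_mul hM0]
    have hp0 : (0:ℝ) < p := lt_trans one_pos hp1
    have hq0 : q ≠ 0 := ne_of_gt hpq.symm.pos
    have e1 : 1 / p * p = 1 := by field_simp
    have e2 : 1 / q * p = p - 1 := by
      rw [hq]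
      field_simp
    rw [e1, e2, Real.rpow_one, mul_comm]

/-- If `μ(ℂⁿ) < ∞` and `|f(w)| ≤ C e^{α|w|²/2}`, then
`∫ (∫ |exp(α⟨z,w⟩)| |f(w)| e^{−α|w|² − α|z|²/2} dμ(w))^p dV(z) ≤ C' μ(ℂⁿ)^p`
for a constant `C'` depending only on `n, α, p, C`. -/
theorem toeplitz_finite_measure_estimate (n : ℕ) (α p C : ℝ) (hα : 0 < α) (hp : 1 ≤ p)
    (hC : 0 ≤ C) :
    ∃ C' : ℝ, 0 < C' ∧
      ∀ (μ : Measure (EuclideanSpace ℂ (Fin n))) [IsFiniteMeasure μ]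
        (f : EuclideanSpace ℂ (Fin n) → ℂ), Measurable f →
        (∀ w, ‖f w‖ ≤ C * Real.exp (α * ‖w‖ ^ 2 / 2)) →
        ∫ z : EuclideanSpace ℂ (Fin n),
            (∫ w, ‖Complex.exp ((α : ℂ) * ⟪w, z⟫)‖ * ‖f w‖ *
              Real.exp (-α * ‖w‖ ^ 2 - α * ‖z‖ ^ 2 / 2) ∂μ) ^ p ≤
          C' * (μ Set.univ).toReal ^ p := by
  have hp0 : (0:ℝ) < p := lt_of_lt_of_le one_pos hp
  set c : ℝ := p * (α / 2) with hcdef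
  have hc : 0 < c := by positivity
  have hGint : Integrable (fun z : EuclideanSpace ℂ (Fin n) => Real.exp (-c * ‖z‖ ^ 2)) :=
    integrable_gaussian_euclidean n hc
  set G : ℝ := ∫ z : EuclideanSpace ℂ (Fin n), Real.exp (-c * ‖z‖ ^ 2) with hGdef
  have hG0 : 0 ≤ G := integral_nonneg fun z => (Real.exp_pos _).le
  refine ⟨C ^ p * G + 1, by positivity, ?_⟩
  intro μ _ f hfm hfb
  by_cases hmu0 : μ = 0
  · simp [hmu0, Real.zero_rpow (ne_of_gt hp0)]
  set M : ℝ := (μ Set.univ).toReal with hMdef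
  have hM0 : 0 ≤ M := ENNReal.toReal_nonneg
  have hMpos : 0 < M := by
    rw [hMdef]
    refine ENNReal.toReal_pos ?_ (measure_ne_top μ _)
    simpa [Measure.measure_univ_eq_zero] using hmu0
  -- pointwise bound on the inner integrand
  have key : ∀ z w : EuclideanSpace ℂ (Fin n),
      ‖Complex.exp ((α : ℂ) * ⟪w, z⟫)‖ * ‖f w‖ *
        Real.exp (-α * ‖w‖ ^ 2 - α * ‖z‖ ^ 2 / 2)
      ≤ C * Real.exp (-(α/2) * ‖z - w‖ ^ 2) := by
    intro z w
    set r : ℝ := (⟪w, z⟫ : ℂ).re with hrdef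
    have hA1 : ‖Complex.exp ((α : ℂ) * ⟪w, z⟫)‖ = Real.exp (α * r) := by
      rw [Complex.norm_exp]
      congr 1
      simp [Complex.mul_re, hrdef]
    have hr : ‖z - w‖ ^ 2 = ‖z‖ ^ 2 - 2 * r + ‖w‖ ^ 2 := by
      have h1 := @norm_sub_sq ℂ _ _ _ _ z w
      rw [inner_re_symm] at h1
      simpa [RCLike.re_to_complex, hrdef] using h1
    calc ‖Complex.exp ((α : ℂ) * ⟪w, z⟫)‖ * ‖f w‖ *
          Real.exp (-α * ‖w‖ ^ 2 - α * ‖z‖ ^ 2 / 2)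
        ≤ Real.exp (α * r) * (C * Real.exp (α * ‖w‖ ^ 2 / 2)) *
          Real.exp (-α * ‖w‖ ^ 2 - α * ‖z‖ ^ 2 / 2) := by
          rw [hA1]
          gcongr
          exact hfb w
      _ = C * Real.exp (α * r + α * ‖w‖ ^ 2 / 2 + (-α * ‖w‖ ^ 2 - α * ‖z‖ ^ 2 / 2)) := by
          rw [Real.exp_add, Real.exp_add]; ring
      _ = C * Real.exp (-(α/2) * ‖z - w‖ ^ 2) := by
          congr 1
          rw [hr]; ring
  set J : EuclideanSpace ℂ (Fin n) → ℝ≥0∞ :=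
    fun z => ∫⁻ w, ENNReal.ofReal (Real.exp (-c * ‖z - w‖ ^ 2)) ∂μ with hJdef
  have hKz : ∀ z, ∫ w, Real.exp (-c * ‖z - w‖ ^ 2) ∂μ = (J z).toReal := by
    intro z
    rw [integral_eq_lintegral_of_nonneg_ae
      (Filter.Eventually.of_forall fun w => (Real.exp_pos _).le)
      (Continuous.aestronglyMeasurable (by fun_prop))]
  -- pointwise bound on the outer integrand
  have hpt : ∀ z, (∫ w, ‖Complex.exp ((α : ℂ) * ⟪w, z⟫)‖ * ‖f w‖ *
        Real.exp (-α * ‖w‖ ^ 2 - α * ‖z‖ ^ 2 / 2) ∂μ) ^ p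
      ≤ C ^ p * M ^ (p - 1) * (J z).toReal := by
    intro z
    have hgc : Continuous fun w : EuclideanSpace ℂ (Fin n) =>
        Real.exp (-(α/2) * ‖z - w‖ ^ 2) := by fun_prop
    have hgm : Measurable fun w : EuclideanSpace ℂ (Fin n) =>
        Real.exp (-(α/2) * ‖z - w‖ ^ 2) := hgc.measurable
    have hg0 : ∀ w : EuclideanSpace ℂ (Fin n),
        (0:ℝ) ≤ Real.exp (-(α/2) * ‖z - w‖ ^ 2) := fun w => (Real.exp_pos _).le
    have hg1 : ∀ w : EuclideanSpace ℂ (Fin n),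
        Real.exp (-(α/2) * ‖z - w‖ ^ 2) ≤ 1 := by
      intro w
      rw [← Real.exp_zero]
      apply Real.exp_le_exp.mpr
      nlinarith [sq_nonneg ‖z - w‖]
    have hI0 : 0 ≤ ∫ w, ‖Complex.exp ((α : ℂ) * ⟪w, z⟫)‖ * ‖f w‖ *
        Real.exp (-α * ‖w‖ ^ 2 - α * ‖z‖ ^ 2 / 2) ∂μ :=
      integral_nonneg fun w => by positivity
    have hCg_int : Integrable (fun w => C * Real.exp (-(α/2) * ‖z - w‖ ^ 2)) μ := by
      refine (integrable_const C).mono' ((continuous_const.mul hgc).aestronglyMeasurable)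
        (Filter.Eventually.of_forall fun w => ?_)
      rw [Real.norm_of_nonneg (by positivity)]
      calc C * Real.exp (-(α/2) * ‖z - w‖ ^ 2) ≤ C * 1 := by
            gcongr
            exact hg1 w
        _ = C := mul_one C
    have hstepA : (∫ w, ‖Complex.exp ((α : ℂ) * ⟪w, z⟫)‖ * ‖f w‖ *
          Real.exp (-α * ‖w‖ ^ 2 - α * ‖z‖ ^ 2 / 2) ∂μ)
        ≤ C * ∫ w, Real.exp (-(α/2) * ‖z - w‖ ^ 2) ∂μ := by
      rw [← integral_const_mul]
      exact integral_mono_of_nonneg (Filter.Eventually.of_forall fun w => by positivity)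
        hCg_int (Filter.Eventually.of_forall fun w => key z w)
    have hJensen := jensen_aux μ hp hgm hg0 hg1
    have hgp_eq : ∀ w : EuclideanSpace ℂ (Fin n),
        Real.exp (-(α/2) * ‖z - w‖ ^ 2) ^ p = Real.exp (-c * ‖z - w‖ ^ 2) := by
      intro w
      rw [← Real.exp_mul]
      congr 1
      rw [hcdef]; ring
    calc (∫ w, ‖Complex.exp ((α : ℂ) * ⟪w, z⟫)‖ * ‖f w‖ *
          Real.exp (-α * ‖w‖ ^ 2 - α * ‖z‖ ^ 2 / 2) ∂μ) ^ p
        ≤ (C * ∫ w, Real.exp (-(α/2) * ‖z - w‖ ^ 2) ∂μ) ^ p :=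
          Real.rpow_le_rpow hI0 hstepA hp0.le
      _ = C ^ p * (∫ w, Real.exp (-(α/2) * ‖z - w‖ ^ 2) ∂μ) ^ p :=
          Real.mul_rpow hC (integral_nonneg hg0)
      _ ≤ C ^ p * (M ^ (p - 1) * ∫ w, Real.exp (-(α/2) * ‖z - w‖ ^ 2) ^ p ∂μ) :=
          mul_le_mul_of_nonneg_left hJensen (Real.rpow_nonneg hC p)
      _ = C ^ p * M ^ (p - 1) * (J z).toReal := by
          simp only [hgp_eq]
          rw [hKz z, ← mul_assoc]
  -- integrability and value of the dominating function
  have hunc : Measurable (Function.uncurry fun z w : EuclideanSpace ℂ (Fin n) =>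
      ENNReal.ofReal (Real.exp (-c * ‖z - w‖ ^ 2))) := by
    apply Measurable.ennreal_ofReal
    apply Continuous.measurable
    fun_prop
  have hJm : Measurable J := Measurable.lintegral_prod_right hunc
  have hswap : ∫⁻ z, J z = ENNReal.ofReal G * μ Set.univ := by
    calc ∫⁻ z, J z
        = ∫⁻ w, (∫⁻ z, ENNReal.ofReal (Real.exp (-c * ‖z - w‖ ^ 2))) ∂μ :=
          lintegral_lintegral_swap hunc.aemeasurable
      _ = ∫⁻ w, ENNReal.ofReal G ∂μ := by
          apply lintegral_congr
          intro w
          have ht := lintegral_add_right_eq_self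
            (μ := (volume : Measure (EuclideanSpace ℂ (Fin n))))
            (f := fun z => ENNReal.ofReal (Real.exp (-c * ‖z‖ ^ 2))) (-w)
          simp_rw [← sub_eq_add_neg] at ht
          rw [ht, ← ofReal_integral_eq_lintegral_ofReal hGint
            (Filter.Eventually.of_forall fun z => (Real.exp_pos _).le)]
      _ = ENNReal.ofReal G * μ Set.univ := lintegral_const _
  have hJfin : ∫⁻ z, J z ≠ ⊤ := by
    rw [hswap]; exact ENNReal.mul_ne_top ENNReal.ofReal_ne_top (measure_ne_top μ _)
  have hJint : Integrable (fun z => (J z).toReal) :=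
    integrable_toReal_of_lintegral_ne_top hJm.aemeasurable hJfin
  have hJval : ∫ z, (J z).toReal = G * M := by
    rw [integral_toReal hJm.aemeasurable (ae_lt_top hJm hJfin), hswap, ENNReal.toReal_mul,
      ENNReal.toReal_ofReal hG0, hMdef]
  calc ∫ z : EuclideanSpace ℂ (Fin n),
        (∫ w, ‖Complex.exp ((α : ℂ) * ⟪w, z⟫)‖ * ‖f w‖ *
          Real.exp (-α * ‖w‖ ^ 2 - α * ‖z‖ ^ 2 / 2) ∂μ) ^ p
      ≤ ∫ z, C ^ p * M ^ (p - 1) * (J z).toReal :=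
        integral_mono_of_nonneg
          (Filter.Eventually.of_forall fun z =>
            Real.rpow_nonneg (integral_nonneg fun w => by positivity) p)
          (hJint.const_mul _) (Filter.Eventually.of_forall hpt)
    _ = C ^ p * M ^ (p - 1) * (G * M) := by rw [integral_const_mul, hJval]
    _ = C ^ p * G * M ^ p := by
        have hMp : M ^ p = M ^ (p - 1) * M := by
          have h := Real.rpow_add hMpos (p - 1) 1
          simpa [Real.rpow_one] using h
        rw [hMp]; ring
    _ ≤ (C ^ p * G + 1) * M ^ p := by
        have hMp0 : 0 ≤ M ^ p := Real.rpow_nonneg hM0 p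
        nlinarith
end

section
/- Let α > 0, δ > 0 and μ a nonnegative Borel measure on ℂⁿ. Then sup_{z∈ℂⁿ} μ(D(z,δ)) < ∞ if and only if sup_{z∈ℂⁿ} ∫_{ℂⁿ} e^{−α|z−w|²} dμ(w) < ∞; moreover the two suprema are comparable up to constants depending only on n, α, δ. -/
open MeasureTheory Metric
open scoped ComplexInnerProductSpace NNReal ENNReal

instance aux_isAddHaar (n : ℕ) :
    Measure.IsAddHaarMeasure (volume : Measure (EuclideanSpace ℂ (Fin n))) := by
  have h : (volume : Measure (EuclideanSpace ℂ (Fin n))) =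
      Measure.map (PiLp.continuousLinearEquiv 2 ℂ (fun _ : Fin n => ℂ)).symm volume := rfl
  rw [h]
  infer_instance

lemma aux_gauss_lt_top (n : ℕ) (b : ℝ) (hb : 0 < b) :
    ∫⁻ x : EuclideanSpace ℂ (Fin n), ENNReal.ofReal (Real.exp (-b * ‖x‖ ^ 2)) < ⊤ := by
  set ν := (stdOrthonormalBasis ℝ (EuclideanSpace ℂ (Fin n))).toBasis.addHaar with hν
  have hint : Integrable (fun v : EuclideanSpace ℂ (Fin n) => Real.exp (-b * ‖v‖ ^ 2)) ν := by
    have h := (GaussianFourier.integrable_cexp_neg_mul_sq_norm_add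
      (V := EuclideanSpace ℂ (Fin n)) (b := (b : ℂ)) (by simpa using hb) 0 0).norm
    have h2 : (fun a : EuclideanSpace ℂ (Fin n) =>
        ‖Complex.exp (-(b:ℂ) * (‖a‖:ℂ) ^ 2 +
          0 * ((inner (𝕜 := ℝ) (0 : EuclideanSpace ℂ (Fin n)) a : ℝ) : ℂ))‖)
        = fun v : EuclideanSpace ℂ (Fin n) => Real.exp (-b * ‖v‖ ^ 2) := by
      funext v
      rw [zero_mul, add_zero, Complex.norm_exp, ← Complex.ofReal_pow,
        ← Complex.ofReal_neg, ← Complex.ofReal_mul, Complex.ofReal_re]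
    rwa [h2] at h
  have heq : (volume : Measure (EuclideanSpace ℂ (Fin n)))
      = Measure.addHaarScalarFactor volume ν • ν :=
    Measure.isAddLeftInvariant_eq_smul _ _
  rw [heq, ENNReal.smul_def, lintegral_smul_measure]
  exact ENNReal.mul_lt_top ENNReal.coe_lt_top hint.lintegral_lt_top

lemma aux_gauss_translate (n : ℕ) (b : ℝ) (z : EuclideanSpace ℂ (Fin n)) :
    ∫⁻ x : EuclideanSpace ℂ (Fin n), ENNReal.ofReal (Real.exp (-b * ‖z - x‖ ^ 2))
      = ∫⁻ x : EuclideanSpace ℂ (Fin n), ENNReal.ofReal (Real.exp (-b * ‖x‖ ^ 2)) := by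
  have hm : Measurable (fun x : EuclideanSpace ℂ (Fin n) =>
      ENNReal.ofReal (Real.exp (-b * ‖x‖ ^ 2))) :=
    (ENNReal.continuous_ofReal.comp (Real.continuous_exp.comp
      (continuous_const.mul (continuous_norm.pow 2)))).measurable
  exact (Measure.measurePreserving_sub_left volume z).lintegral_comp hm

lemma aux_measurable (n : ℕ) (b : ℝ) (z : EuclideanSpace ℂ (Fin n)) :
    Measurable (fun w : EuclideanSpace ℂ (Fin n) =>
      ENNReal.ofReal (Real.exp (-b * ‖z - w‖ ^ 2))) :=
  (ENNReal.continuous_ofReal.comp (Real.continuous_exp.comp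
    (continuous_const.mul (((continuous_const.sub continuous_id).norm).pow 2)))).measurable

/-- `sup_z μ(D(z,δ)) < ∞` iff `sup_z ∫ e^{−α|z−w|²} dμ(w) < ∞`, and the two suprema are
comparable with constants depending only on `n, α, δ`. -/
theorem averaging_function_iff_berezin (n : ℕ) (α δ : ℝ) (hα : 0 < α) (hδ : 0 < δ) :
    ∃ c C : ℝ≥0, 0 < c ∧ 0 < C ∧
      ∀ μ : Measure (EuclideanSpace ℂ (Fin n)),
        ((⨆ z : EuclideanSpace ℂ (Fin n), μ (ball z δ)) < ⊤ ↔
          (⨆ z : EuclideanSpace ℂ (Fin n),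
            ∫⁻ w, ENNReal.ofReal (Real.exp (-α * ‖z - w‖ ^ 2)) ∂μ) < ⊤) ∧
        (⨆ z : EuclideanSpace ℂ (Fin n), μ (ball z δ)) ≤
          c * ⨆ z : EuclideanSpace ℂ (Fin n),
            ∫⁻ w, ENNReal.ofReal (Real.exp (-α * ‖z - w‖ ^ 2)) ∂μ ∧
        (⨆ z : EuclideanSpace ℂ (Fin n),
            ∫⁻ w, ENNReal.ofReal (Real.exp (-α * ‖z - w‖ ^ 2)) ∂μ) ≤
          C * ⨆ z : EuclideanSpace ℂ (Fin n), μ (ball z δ) := by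
  classical
  have hexp : (0:ℝ) < Real.exp (α * δ ^ 2) := Real.exp_pos _
  set v : ℝ≥0∞ := volume (ball (0 : EuclideanSpace ℂ (Fin n)) δ) with hv
  have hv0 : v ≠ 0 := (measure_ball_pos _ _ hδ).ne'
  have hvt : v ≠ ⊤ := measure_ball_lt_top.ne
  set I : ℝ≥0∞ := ∫⁻ x : EuclideanSpace ℂ (Fin n),
      ENNReal.ofReal (Real.exp (-(α/2) * ‖x‖ ^ 2)) with hI
  have hIt : I ≠ ⊤ := (aux_gauss_lt_top n (α/2) (by linarith)).ne
  set E1 : ℝ≥0∞ := ENNReal.ofReal (Real.exp (α * δ ^ 2)) with hE1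
  have hE1t : E1 ≠ ⊤ := ENNReal.ofReal_ne_top
  set C0 : ℝ≥0∞ := E1 * I / v with hC0
  have hC0t : C0 ≠ ⊤ :=
    (ENNReal.div_lt_top (ENNReal.mul_lt_top hE1t.lt_top hIt.lt_top).ne hv0).ne
  refine ⟨(Real.exp (α * δ ^ 2)).toNNReal, C0.toNNReal + 1,
    Real.toNNReal_pos.mpr hexp, by positivity, fun μ => ?_⟩
  set S : ℝ≥0∞ := ⨆ z : EuclideanSpace ℂ (Fin n), μ (ball z δ) with hS
  set T : ℝ≥0∞ := ⨆ z : EuclideanSpace ℂ (Fin n),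
      ∫⁻ w, ENNReal.ofReal (Real.exp (-α * ‖z - w‖ ^ 2)) ∂μ with hT
  -- the easy direction
  have hcoe : ((Real.exp (α * δ ^ 2)).toNNReal : ℝ≥0∞) = E1 := rfl
  have h1 : S ≤ ((Real.exp (α * δ ^ 2)).toNNReal : ℝ≥0) * T := by
    rw [hS]
    refine iSup_le fun z => ?_
    have key : ENNReal.ofReal (Real.exp (-(α * δ ^ 2))) * μ (ball z δ)
        ≤ ∫⁻ w, ENNReal.ofReal (Real.exp (-α * ‖z - w‖ ^ 2)) ∂μ := by
      calc ENNReal.ofReal (Real.exp (-(α * δ ^ 2))) * μ (ball z δ)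
          = ∫⁻ _ in ball z δ, ENNReal.ofReal (Real.exp (-(α * δ ^ 2))) ∂μ := by
            rw [setLIntegral_const]
        _ ≤ ∫⁻ w in ball z δ, ENNReal.ofReal (Real.exp (-α * ‖z - w‖ ^ 2)) ∂μ := by
            refine setLIntegral_mono' measurableSet_ball fun w hw => ?_
            have hlt : ‖z - w‖ < δ := by
              rw [← dist_eq_norm]; exact mem_ball'.mp hw
            refine ENNReal.ofReal_le_ofReal (Real.exp_le_exp.mpr ?_)
            have hsq : ‖z - w‖ ^ 2 ≤ δ ^ 2 := by nlinarith [norm_nonneg (z - w)]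
            nlinarith [mul_le_mul_of_nonneg_left hsq hα.le]
        _ ≤ ∫⁻ w, ENNReal.ofReal (Real.exp (-α * ‖z - w‖ ^ 2)) ∂μ :=
            setLIntegral_le_lintegral _ _
    calc μ (ball z δ)
        = E1 * (ENNReal.ofReal (Real.exp (-(α * δ ^ 2))) * μ (ball z δ)) := by
          rw [← mul_assoc, hE1, ← ENNReal.ofReal_mul hexp.le, ← Real.exp_add]
          simp
      _ ≤ E1 * ∫⁻ w, ENNReal.ofReal (Real.exp (-α * ‖z - w‖ ^ 2)) ∂μ :=
          mul_le_mul_right key _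
      _ ≤ ((Real.exp (α * δ ^ 2)).toNNReal : ℝ≥0∞) * T := by
          rw [hcoe]
          exact mul_le_mul_right (le_iSup (fun z => ∫⁻ w,
            ENNReal.ofReal (Real.exp (-α * ‖z - w‖ ^ 2)) ∂μ) z) _
  -- the hard direction
  have h2 : T ≤ ((C0.toNNReal + 1 : ℝ≥0) : ℝ≥0∞) * S := by
    rcases eq_top_or_lt_top S with hStop | hSlt
    · rw [hStop, ENNReal.mul_top (by simp)]
      exact le_top
    · have hlf : IsLocallyFiniteMeasure μ :=
        ⟨fun x => ⟨ball x δ, ball_mem_nhds x hδ,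
          (le_iSup (fun z => μ (ball z δ)) x).trans_lt hSlt⟩⟩
      rw [hT]
      refine iSup_le fun z => ?_
      set g : EuclideanSpace ℂ (Fin n) → ℝ≥0∞ :=
        fun x => ENNReal.ofReal (Real.exp (-(α/2) * ‖z - x‖ ^ 2)) with hg
      have hgm : Measurable g := aux_measurable n (α/2) z
      have hfm : Measurable (fun w : EuclideanSpace ℂ (Fin n) =>
          ENNReal.ofReal (Real.exp (-α * ‖z - w‖ ^ 2))) := aux_measurable n α z
      -- Step 1 : pointwise comparison with an average over a ball
      have step1 : ∀ w : EuclideanSpace ℂ (Fin n),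
          ENNReal.ofReal (Real.exp (-α * ‖z - w‖ ^ 2)) * v
          ≤ ∫⁻ x, (ball w δ).indicator (fun x => E1 * g x) x := by
        intro w
        rw [lintegral_indicator measurableSet_ball]
        have hvol : volume (ball w δ) = v := by
          rw [hv, Measure.addHaar_ball_center]
        calc ENNReal.ofReal (Real.exp (-α * ‖z - w‖ ^ 2)) * v
            = ∫⁻ _ in ball w δ, ENNReal.ofReal (Real.exp (-α * ‖z - w‖ ^ 2)) := by
              rw [setLIntegral_const, hvol]
          _ ≤ ∫⁻ x in ball w δ, E1 * g x := by
              refine setLIntegral_mono' measurableSet_ball fun x hx => ?_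
              have h2' : ‖w - x‖ < δ := by
                rw [← dist_eq_norm]; exact mem_ball'.mp hx
              have htri : ‖z - x‖ ≤ ‖z - w‖ + ‖w - x‖ := by
                have := norm_add_le (z - w) (w - x)
                simpa using this
              have hd : ‖z - x‖ ^ 2 ≤ 2 * δ ^ 2 + 2 * ‖z - w‖ ^ 2 := by
                have h2sq : ‖z - x‖ ^ 2 ≤ (‖z - w‖ + ‖w - x‖) ^ 2 :=
                  pow_le_pow_left₀ (norm_nonneg (z - x)) htri 2
                have h2sq' : ‖w - x‖ ^ 2 < δ ^ 2 :=
                  pow_lt_pow_left₀ h2' (norm_nonneg (w - x)) (by norm_num)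
                nlinarith [sq_nonneg (‖z - w‖ - ‖w - x‖)]
              rw [hE1, hg, ← ENNReal.ofReal_mul hexp.le, ← Real.exp_add]
              refine ENNReal.ofReal_le_ofReal (Real.exp_le_exp.mpr ?_)
              nlinarith [mul_le_mul_of_nonneg_left hd (by linarith : (0:ℝ) ≤ α/2)]
      -- Step 2 : integrate in `w`
      have step2 : (∫⁻ w, ENNReal.ofReal (Real.exp (-α * ‖z - w‖ ^ 2)) ∂μ) * v
          ≤ ∫⁻ w, ∫⁻ x, (ball w δ).indicator (fun x => E1 * g x) x ∂volume ∂μ := by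
        rw [← lintegral_mul_const v hfm]
        exact lintegral_mono step1
      -- Step 3 : Tonelli
      have hopen : IsOpen {p : EuclideanSpace ℂ (Fin n) × EuclideanSpace ℂ (Fin n) |
          dist p.2 p.1 < δ} :=
        isOpen_lt (continuous_snd.dist continuous_fst) continuous_const
      have hmeas : AEMeasurable (Function.uncurry fun w x : EuclideanSpace ℂ (Fin n) =>
          (ball w δ).indicator (fun x => E1 * g x) x) (μ.prod volume) := by
        have huncurry : (Function.uncurry fun w x : EuclideanSpace ℂ (Fin n) =>
            (ball w δ).indicator (fun x => E1 * g x) x)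
            = fun p : EuclideanSpace ℂ (Fin n) × EuclideanSpace ℂ (Fin n) =>
              ({p : EuclideanSpace ℂ (Fin n) × EuclideanSpace ℂ (Fin n) |
                dist p.2 p.1 < δ}).indicator (fun _ => (1:ℝ≥0∞)) p * (E1 * g p.2) := by
          funext p
          by_cases h : p.2 ∈ ball p.1 δ
          · rw [Function.uncurry]
            rw [Set.indicator_of_mem h, Set.indicator_of_mem (by simpa [mem_ball] using h),
              one_mul]
          · rw [Function.uncurry]
            rw [Set.indicator_of_notMem h,
              Set.indicator_of_notMem (by simpa [mem_ball] using h), zero_mul]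
        rw [huncurry]
        exact ((measurable_one.indicator hopen.measurableSet).mul
          ((hgm.const_mul E1).comp measurable_snd)).aemeasurable
      have hsf : SigmaFinite μ := inferInstance
      have swap := lintegral_lintegral_swap hmeas
      -- Step 4 : inner integral
      have inner_eq : ∀ x : EuclideanSpace ℂ (Fin n),
          (∫⁻ w, (ball w δ).indicator (fun x => E1 * g x) x ∂μ)
          = E1 * g x * μ (ball x δ) := by
        intro x
        have hsymm : ∀ w : EuclideanSpace ℂ (Fin n),
            (ball w δ).indicator (fun x => E1 * g x) x
            = (ball x δ).indicator (fun _ => E1 * g x) w := by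
          intro w
          by_cases h : x ∈ ball w δ
          · rw [Set.indicator_of_mem h, Set.indicator_of_mem (mem_ball_comm.mp h)]
          · rw [Set.indicator_of_notMem h,
              Set.indicator_of_notMem (fun hc => h (mem_ball_comm.mp hc))]
        simp_rw [hsymm]
        rw [lintegral_indicator measurableSet_ball, setLIntegral_const]
      -- Step 5 : outer integral
      have outer : (∫⁻ x, E1 * g x * μ (ball x δ) ∂volume) ≤ E1 * I * S := by
        calc (∫⁻ x, E1 * g x * μ (ball x δ) ∂volume)
            ≤ ∫⁻ x, E1 * g x * S ∂volume := by
              refine lintegral_mono fun x => ?_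
              exact mul_le_mul_right (le_iSup (fun z => μ (ball z δ)) x) _
          _ = E1 * S * ∫⁻ x, g x ∂volume := by
              have : (fun x : EuclideanSpace ℂ (Fin n) => E1 * g x * S)
                  = fun x => (E1 * S) * g x := by funext x; ring
              rw [this, lintegral_const_mul (E1 * S) hgm]
          _ = E1 * S * I := by
              rw [hg, hI]
              exact congrArg _ (aux_gauss_translate n (α/2) z)
          _ = E1 * I * S := by ring
      -- put everything together
      have final : (∫⁻ w, ENNReal.ofReal (Real.exp (-α * ‖z - w‖ ^ 2)) ∂μ) * v
          ≤ E1 * I * S := by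
        calc (∫⁻ w, ENNReal.ofReal (Real.exp (-α * ‖z - w‖ ^ 2)) ∂μ) * v
            ≤ ∫⁻ w, ∫⁻ x, (ball w δ).indicator (fun x => E1 * g x) x ∂volume ∂μ := step2
          _ = ∫⁻ x, ∫⁻ w, (ball w δ).indicator (fun x => E1 * g x) x ∂μ ∂volume := swap
          _ = ∫⁻ x, E1 * g x * μ (ball x δ) ∂volume := lintegral_congr inner_eq
          _ ≤ E1 * I * S := outer
      have hdiv : (∫⁻ w, ENNReal.ofReal (Real.exp (-α * ‖z - w‖ ^ 2)) ∂μ)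
          ≤ E1 * I * S / v :=
        (ENNReal.le_div_iff_mul_le (Or.inl hv0) (Or.inl hvt)).mpr final
      have hre : E1 * I * S / v = C0 * S := by
        rw [hC0, ENNReal.div_eq_inv_mul, ENNReal.div_eq_inv_mul]; ring
      have hC0le : C0 ≤ ((C0.toNNReal + 1 : ℝ≥0) : ℝ≥0∞) := by
        rw [ENNReal.coe_add, ENNReal.coe_toNNReal hC0t]
        exact le_self_add
      calc (∫⁻ w, ENNReal.ofReal (Real.exp (-α * ‖z - w‖ ^ 2)) ∂μ)
          ≤ C0 * S := hre ▸ hdiv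
        _ ≤ ((C0.toNNReal + 1 : ℝ≥0) : ℝ≥0∞) * S := mul_le_mul_left hC0le _
  refine ⟨⟨fun hS' => ?_, fun hT' => ?_⟩, h1, h2⟩
  · exact lt_of_le_of_lt h2 (ENNReal.mul_lt_top ENNReal.coe_lt_top hS')
  · exact lt_of_le_of_lt h1 (ENNReal.mul_lt_top ENNReal.coe_lt_top hT')
end

section
/- Let α > 0, r > 0, and let (z_j) be an r/2-lattice in ℂⁿ. If (c_j) ∈ ℓ^∞, then f = Σ_j c_j k_{z_j} converges uniformly on compact subsets of ℂⁿ to an entire function with ‖f‖_{(∞,α)} ≤ C sup_j |c_j|, where k_{z_j}(z) = exp(α⟨z,z_j⟩ − α|z_j|²/2) and C depends only on n, α, r. -/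
open MeasureTheory Metric
open scoped ComplexInnerProductSpace NNReal ENNReal

instance haarE (n : ℕ) : (volume : Measure (EuclideanSpace ℂ (Fin n))).IsAddHaarMeasure := by
  have : (volume : Measure (EuclideanSpace ℂ (Fin n)))
      = Measure.map (PiLp.continuousLinearEquiv 2 ℂ (fun _ : Fin n => ℂ)).symm volume := rfl
  rw [this]; infer_instance

lemma count_bound {n : ℕ} {r : ℝ} (hr : 0 < r) {z : ℕ → EuclideanSpace ℂ (Fin n)}
    (hdisj : Pairwise fun j k => Disjoint (ball (z j) (r / 4)) (ball (z k) (r / 4)))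
    (x : EuclideanSpace ℂ (Fin n)) {R : ℝ} (hR : 0 ≤ R) (F : Finset ℕ)
    (hF : ∀ j ∈ F, dist x (z j) ≤ R) :
    (F.card : ℝ) ≤ ((R + r/4) / (r/4)) ^ (Module.finrank ℝ (EuclideanSpace ℂ (Fin n))) := by
  have hr4 : (0:ℝ) < r/4 := by linarith
  have hnt : Nontrivial (EuclideanSpace ℂ (Fin n)) := by
    refine ⟨z 0, z 1, fun h => ?_⟩
    have hd : Disjoint (ball (z 0) (r/4)) (ball (z 1) (r/4)) := hdisj (show (0:ℕ) ≠ 1 by norm_num)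
    rw [h, disjoint_self] at hd
    exact absurd hd (Set.nonempty_iff_ne_empty.mp ⟨z 1, mem_ball_self hr4⟩)
  set d := Module.finrank ℝ (EuclideanSpace ℂ (Fin n)) with hd
  set μ := (volume : Measure (EuclideanSpace ℂ (Fin n)))
  set B := μ (ball 0 1) with hB
  have hB0 : B ≠ 0 := (measure_ball_pos μ 0 one_pos).ne'
  have hBtop : B ≠ ⊤ := measure_ball_lt_top.ne
  have key : (F.card : ℝ≥0∞) * ENNReal.ofReal ((r/4)^d) * B ≤ ENNReal.ofReal ((R + r/4)^d) * B := by
    calc (F.card : ℝ≥0∞) * ENNReal.ofReal ((r/4)^d) * B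
        = ∑ j ∈ F, μ (ball (z j) (r/4)) := by
          rw [Finset.sum_congr rfl (fun j _ => Measure.addHaar_ball μ (z j) hr4.le)]
          rw [Finset.sum_const, nsmul_eq_mul, mul_assoc]
      _ = μ (⋃ j ∈ F, ball (z j) (r/4)) := by
          refine (measure_biUnion_finset ?_ (fun j _ => measurableSet_ball)).symm
          exact fun j _ k _ hjk => hdisj hjk
      _ ≤ μ (ball x (R + r/4)) := by
          refine measure_mono (Set.iUnion₂_subset fun j hj w hw => ?_)
          rw [mem_ball] at hw ⊢
          have := hF j hj
          rw [dist_comm] at this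
          calc dist w x ≤ dist w (z j) + dist (z j) x := dist_triangle _ _ _
            _ < R + r/4 := by linarith
      _ = ENNReal.ofReal ((R + r/4)^d) * B := Measure.addHaar_ball μ x (by linarith)
  rw [ENNReal.mul_le_mul_iff_left hB0 hBtop] at key
  have key2 : (F.card : ℝ) * (r/4)^d ≤ (R + r/4)^d := by
    rw [← ENNReal.ofReal_natCast, ← ENNReal.ofReal_mul (Nat.cast_nonneg _)] at key
    exact (ENNReal.ofReal_le_ofReal_iff (by positivity)).mp key
  rw [div_pow, le_div_iff₀ (by positivity)]
  exact key2

lemma gaussian_sum_bound {n : ℕ} {r : ℝ} (hr : 0 < r) {z : ℕ → EuclideanSpace ℂ (Fin n)}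
    (hdisj : Pairwise fun j k => Disjoint (ball (z j) (r / 4)) (ball (z k) (r / 4)))
    {β : ℝ} (hβ : 0 < β) :
    ∃ C0 : ℝ, 0 < C0 ∧ ∀ x : EuclideanSpace ℂ (Fin n),
      Summable (fun j => Real.exp (-β * dist x (z j) ^ 2)) ∧
      (∑' j, Real.exp (-β * dist x (z j) ^ 2)) ≤ C0 := by
  classical
  set d := Module.finrank ℝ (EuclideanSpace ℂ (Fin n)) with hd
  set q : ℝ := Real.exp (-β) with hqdef
  have hq0 : 0 < q := Real.exp_pos _
  have hq1 : q < 1 := Real.exp_lt_one_iff.mpr (by linarith)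
  set b : ℕ → ℝ := fun m => (((m : ℝ) + 1 + r/4) / (r/4)) ^ d * Real.exp (-β * (m : ℝ) ^ 2)
    with hbdef
  have hr4 : (0:ℝ) < r/4 := by linarith
  have hbnn : ∀ m, 0 ≤ b m := fun m => by positivity
  -- summability of b
  have hb_le : ∀ m : ℕ, b m ≤ ((1 + r/4)/(r/4))^d * (((m:ℝ)+1)^d * q ^ m) := by
    intro m
    have h1 : ((m : ℝ) + 1 + r/4) / (r/4) ≤ ((1 + r/4)/(r/4)) * ((m:ℝ)+1) := by
      rw [div_mul_eq_mul_div, div_le_div_iff_of_pos_right hr4]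
      nlinarith [Nat.cast_nonneg (α := ℝ) m]
    have h2 : Real.exp (-β * (m : ℝ) ^ 2) ≤ q ^ m := by
      rw [hqdef, ← Real.exp_nat_mul]
      apply Real.exp_le_exp.mpr
      have hmm : (m:ℝ) ≤ (m:ℝ)^2 := by
        rcases Nat.eq_zero_or_pos m with h | h
        · simp [h]
        · have h1m : (1:ℝ) ≤ (m:ℝ) := by exact_mod_cast h
          nlinarith
      have := mul_le_mul_of_nonneg_left hmm hβ.le
      linarith
    calc b m ≤ (((1 + r/4)/(r/4)) * ((m:ℝ)+1)) ^ d * q ^ m := by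
          apply mul_le_mul (pow_le_pow_left₀ (by positivity) h1 d) h2 (Real.exp_pos _).le
          positivity
      _ = ((1 + r/4)/(r/4))^d * (((m:ℝ)+1)^d * q ^ m) := by rw [mul_pow]; ring
  have hsum1 : Summable (fun m : ℕ => ((m:ℝ))^d * q ^ m) :=
    summable_pow_mul_geometric_of_norm_lt_one d (by rwa [Real.norm_eq_abs, abs_of_pos hq0])
  have hsum2 : Summable (fun m : ℕ => ((m:ℝ)+1)^d * q ^ (m+1)) := by
    have := hsum1.comp_injective (add_left_injective 1)
    apply this.congr
    intro m
    simp only [Function.comp_apply]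
    push_cast
    ring
  have hsumb : Summable b := by
    apply Summable.of_nonneg_of_le hbnn hb_le
    have := (hsum2.mul_left (((1 + r/4)/(r/4))^d * q⁻¹))
    apply this.congr
    intro m
    rw [pow_succ]
    field_simp
  have htnn : 0 ≤ ∑' m, b m := tsum_nonneg hbnn
  refine ⟨(∑' m, b m) + 1, by linarith, fun x => ?_⟩
  have key : ∀ F : Finset ℕ, ∑ j ∈ F, Real.exp (-β * dist x (z j) ^ 2) ≤ ∑' m, b m := by
    intro F
    set mf : ℕ → ℕ := fun j => ⌊dist x (z j)⌋₊ with hmf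
    rw [← Finset.sum_fiberwise_of_maps_to (g := mf) (t := F.image mf)
      (fun j hj => Finset.mem_image_of_mem mf hj)]
    have hfib : ∀ m ∈ F.image mf,
        ∑ j ∈ F.filter (fun j => mf j = m), Real.exp (-β * dist x (z j) ^ 2) ≤ b m := by
      intro m _
      have hcard : ((F.filter (fun j => mf j = m)).card : ℝ) ≤ (((m:ℝ)+1 + r/4)/(r/4))^d := by
        refine count_bound hr hdisj x (R := (m:ℝ)+1) ?_ _ (fun j hj => ?_)
        · positivity
        have hjm : mf j = m := (Finset.mem_filter.mp hj).2
        have := Nat.lt_floor_add_one (dist x (z j))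
        rw [hmf] at hjm
        rw [← hjm]
        push_cast
        exact this.le
      calc ∑ j ∈ F.filter (fun j => mf j = m), Real.exp (-β * dist x (z j) ^ 2)
          ≤ ∑ _j ∈ F.filter (fun j => mf j = m), Real.exp (-β * (m:ℝ) ^ 2) := by
            apply Finset.sum_le_sum
            intro j hj
            have hjm : mf j = m := (Finset.mem_filter.mp hj).2
            apply Real.exp_le_exp.mpr
            have h5 : (m : ℝ) ≤ dist x (z j) := by
              rw [← hjm, hmf]; exact Nat.floor_le dist_nonneg
            have h6 := mul_self_le_mul_self (by positivity : (0:ℝ) ≤ (m:ℝ)) h5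
            have h7 : (m:ℝ)^2 ≤ dist x (z j)^2 := by nlinarith
            have := mul_le_mul_of_nonneg_left h7 hβ.le
            linarith
        _ = ((F.filter (fun j => mf j = m)).card : ℝ) * Real.exp (-β * (m:ℝ)^2) := by
            rw [Finset.sum_const, nsmul_eq_mul]
        _ ≤ b m := by
            apply mul_le_mul_of_nonneg_right hcard (Real.exp_pos _).le
    calc ∑ m ∈ F.image mf, ∑ j ∈ F.filter (fun j => mf j = m), Real.exp (-β * dist x (z j) ^ 2)
        ≤ ∑ m ∈ F.image mf, b m := Finset.sum_le_sum hfib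
      _ ≤ ∑' m, b m := hsumb.sum_le_tsum _ (fun m _ => hbnn m)
  have hsumg : Summable (fun j => Real.exp (-β * dist x (z j) ^ 2)) :=
    summable_of_sum_range_le (fun j => (Real.exp_pos _).le) (fun N => key (Finset.range N))
  refine ⟨hsumg, ?_⟩
  have := Summable.tsum_le_of_sum_range_le hsumg (fun N => key (Finset.range N))
  linarith

lemma norm_kernel {n : ℕ} (α : ℝ) (w x : EuclideanSpace ℂ (Fin n)) :
    ‖Complex.exp ((α : ℂ) * ⟪w, x⟫ - (α : ℂ) * (‖w‖ : ℂ) ^ 2 / 2)‖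
      = Real.exp (α * ‖x‖ ^ 2 / 2 - α * dist x w ^ 2 / 2) := by
  rw [Complex.norm_exp]
  congr 1
  have h1 : (⟪w, x⟫ : ℂ).re = (‖x‖ ^ 2 + ‖w‖ ^ 2 - dist x w ^ 2) / 2 := by
    have h2 := norm_sub_sq (𝕜 := ℂ) x w
    have h3 : RCLike.re (⟪x, w⟫ : ℂ) = (⟪w, x⟫ : ℂ).re := by
      rw [inner_re_symm]; simp [RCLike.re_to_complex]
    rw [h3] at h2
    rw [dist_eq_norm]
    linarith
  have h4 : ((α : ℂ) * (‖w‖ : ℂ) ^ 2 / 2) = ((α * ‖w‖ ^ 2 / 2 : ℝ) : ℂ) := by push_cast; ring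
  rw [h4, Complex.sub_re, Complex.re_ofReal_mul, Complex.ofReal_re, h1]
  ring

lemma exp_quad_ineq {α R nx d s : ℝ} (hα : 0 < α) (hnx : 0 ≤ nx) (hle : nx ≤ R)
    (hd : 0 ≤ d) (hs0 : 0 ≤ s) (hs : s ≤ nx + d) :
    α * nx ^ 2 / 2 - α * d ^ 2 / 2 + (α/4) * s ^ 2 ≤ α * R ^ 2 := by
  have h1 : s ^ 2 ≤ (nx + d) ^ 2 := by nlinarith
  have h3 : (nx + d) ^ 2 ≤ 2 * nx ^ 2 + 2 * d ^ 2 := by nlinarith [sq_nonneg (nx - d)]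
  have h2 : nx ^ 2 ≤ R ^ 2 := by nlinarith
  nlinarith [mul_le_mul_of_nonneg_left (h1.trans h3) hα.le,
    mul_le_mul_of_nonneg_left h2 hα.le]

lemma linear_gaussian_bound {α t : ℝ} (hα : 0 < α) (ht : 0 ≤ t) :
    t * Real.exp (-(α/4) * t ^ 2) ≤ (1 + 8/α) * Real.exp (-(α/8) * t ^ 2) := by
  have ha : 0 < 8/α := by positivity
  have e1 : 1 + (α/8) * t ^ 2 ≤ Real.exp ((α/8) * t ^ 2) := by
    have := Real.add_one_le_exp ((α/8) * t ^ 2)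
    linarith
  have e2 : t ≤ 1 + t ^ 2 := by nlinarith [sq_nonneg (t - 1)]
  have e4 : (8/α) * ((α/8) * t ^ 2) = t ^ 2 := by field_simp
  have e3 : 1 + t ^ 2 ≤ (1 + 8/α) * (1 + (α/8) * t ^ 2) := by nlinarith [mul_nonneg hα.le (sq_nonneg t)]
  have e5 : t ≤ (1 + 8/α) * Real.exp ((α/8) * t ^ 2) := by
    calc t ≤ 1 + t ^ 2 := e2
      _ ≤ (1 + 8/α) * (1 + (α/8) * t ^ 2) := e3
      _ ≤ (1 + 8/α) * Real.exp ((α/8) * t ^ 2) :=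
          mul_le_mul_of_nonneg_left e1 (by positivity)
  calc t * Real.exp (-(α/4) * t ^ 2)
      ≤ ((1 + 8/α) * Real.exp ((α/8) * t ^ 2)) * Real.exp (-(α/4) * t ^ 2) :=
        mul_le_mul_of_nonneg_right e5 (Real.exp_pos _).le
    _ = (1 + 8/α) * Real.exp (-(α/8) * t ^ 2) := by
        rw [mul_assoc, ← Real.exp_add]
        congr 2
        ring

/-- If `(z_j)` is an `r/2`-lattice and `(c_j) ∈ ℓ^∞`, then `f = Σ_j c_j k_{z_j}` converges
uniformly on compact sets to an entire function with `‖f‖_{(∞,α)} ≤ C sup_j |c_j|`,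
where `C` depends only on `n, α, r`. -/
theorem atomic_sum_in_growth_space (n : ℕ) (α r : ℝ) (hα : 0 < α) (hr : 0 < r)
    (z : ℕ → EuclideanSpace ℂ (Fin n))
    (hcover : ∀ x : EuclideanSpace ℂ (Fin n), ∃ j, x ∈ ball (z j) (r / 2))
    (hdisj : Pairwise fun j k => Disjoint (ball (z j) (r / 4)) (ball (z k) (r / 4))) :
    ∃ C : ℝ, 0 < C ∧
      ∀ (c : ℕ → ℂ) (M : ℝ), (∀ j, ‖c j‖ ≤ M) →
        ∃ f : EuclideanSpace ℂ (Fin n) → ℂ, Differentiable ℂ f ∧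
          (∀ K : Set (EuclideanSpace ℂ (Fin n)), IsCompact K →
            TendstoUniformlyOn
              (fun (N : ℕ) (x : EuclideanSpace ℂ (Fin n)) =>
                ∑ j ∈ Finset.range N,
                  c j * Complex.exp ((α : ℂ) * ⟪z j, x⟫ - (α : ℂ) * (‖z j‖ : ℂ) ^ 2 / 2))
              f Filter.atTop K) ∧
          ∀ x : EuclideanSpace ℂ (Fin n),
            ‖f x‖ * Real.exp (-α * ‖x‖ ^ 2 / 2) ≤ C * M := by
  obtain ⟨C1, hC1, hS1⟩ := gaussian_sum_bound hr hdisj (β := α/2) (by linarith)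
  obtain ⟨C2, hC2, hS2⟩ := gaussian_sum_bound hr hdisj (β := α/4) (by linarith)
  obtain ⟨C3, hC3, hS3⟩ := gaussian_sum_bound hr hdisj (β := α/8) (by linarith)
  refine ⟨C1, hC1, fun c M hM => ?_⟩
  have hM0 : 0 ≤ M := le_trans (norm_nonneg _) (hM 0)
  set g : ℕ → EuclideanSpace ℂ (Fin n) → ℂ := fun j x =>
    c j * Complex.exp ((α : ℂ) * ⟪z j, x⟫ - (α : ℂ) * (‖z j‖ : ℂ) ^ 2 / 2) with hg
  have hnorm : ∀ j x, ‖g j x‖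
      = ‖c j‖ * Real.exp (α * ‖x‖ ^ 2 / 2 - α * dist x (z j) ^ 2 / 2) := by
    intro j x
    rw [hg]
    simp only
    rw [norm_mul, norm_kernel]
  have hbound : ∀ j x, ‖g j x‖
      ≤ M * Real.exp (α * ‖x‖ ^ 2 / 2) * Real.exp (-(α/2) * dist x (z j) ^ 2) := by
    intro j x
    rw [hnorm, show α * ‖x‖ ^ 2 / 2 - α * dist x (z j) ^ 2 / 2
      = α * ‖x‖ ^ 2 / 2 + (-(α/2) * dist x (z j) ^ 2) by ring, Real.exp_add, ← mul_assoc]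
    exact mul_le_mul_of_nonneg_right
      (mul_le_mul_of_nonneg_right (hM j) (Real.exp_pos _).le) (Real.exp_pos _).le
  have hptsum : ∀ x, Summable (fun j => ‖g j x‖) := by
    intro x
    exact Summable.of_nonneg_of_le (fun j => norm_nonneg _) (fun j => hbound j x)
      (((hS1 x).1).mul_left _)
  -- uniform bound on balls
  have hterm : ∀ (R : ℝ) (x : EuclideanSpace ℂ (Fin n)), ‖x‖ ≤ R → ∀ j, ‖g j x‖
      ≤ M * Real.exp (α * R ^ 2) * Real.exp (-(α/4) * dist 0 (z j) ^ 2) := by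
    intro R x hx j
    have hkey : α * ‖x‖ ^ 2 / 2 - α * dist x (z j) ^ 2 / 2
        ≤ α * R ^ 2 + (-(α/4) * dist 0 (z j) ^ 2) := by
      have hs : dist 0 (z j) ≤ ‖x‖ + dist x (z j) := by
        calc dist 0 (z j) ≤ dist (0 : EuclideanSpace ℂ (Fin n)) x + dist x (z j) :=
              dist_triangle _ _ _
          _ = ‖x‖ + dist x (z j) := by rw [dist_comm, dist_zero_right]
      have := exp_quad_ineq hα (norm_nonneg x) hx dist_nonneg dist_nonneg hs
      linarith
    calc ‖g j x‖ = ‖c j‖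
          * Real.exp (α * ‖x‖ ^ 2 / 2 - α * dist x (z j) ^ 2 / 2) := hnorm j x
      _ ≤ M * Real.exp (α * R ^ 2 + (-(α/4) * dist 0 (z j) ^ 2)) :=
          mul_le_mul (hM j) (Real.exp_le_exp.mpr hkey) (Real.exp_pos _).le hM0
      _ = M * Real.exp (α * R ^ 2) * Real.exp (-(α/4) * dist 0 (z j) ^ 2) := by
          rw [Real.exp_add, mul_assoc]
  refine ⟨fun x => ∑' j, g j x, ?_, ?_, ?_⟩
  · -- differentiability
    intro x0
    set R : ℝ := ‖x0‖ + 1 with hR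
    have hRpos : 0 < R := by positivity
    set f' : ℕ → EuclideanSpace ℂ (Fin n) → (EuclideanSpace ℂ (Fin n)) →L[ℂ] ℂ := fun j x =>
      c j • (Complex.exp ((α : ℂ) * ⟪z j, x⟫ - (α : ℂ) * (‖z j‖ : ℂ) ^ 2 / 2)
        • ((α : ℂ) • (innerSL ℂ (z j)))) with hf'
    have hderiv : ∀ (j : ℕ), ∀ x ∈ ball (0 : EuclideanSpace ℂ (Fin n)) R,
        HasFDerivAt (g j) (f' j x) x := by
      intro j x _
      have h1 : HasFDerivAt (fun x : EuclideanSpace ℂ (Fin n) =>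
          (α : ℂ) * ⟪z j, x⟫ - (α : ℂ) * (‖z j‖ : ℂ) ^ 2 / 2)
          ((α : ℂ) • (innerSL ℂ (z j))) x := by
        have h2 : HasFDerivAt (fun x : EuclideanSpace ℂ (Fin n) => (⟪z j, x⟫ : ℂ))
            (innerSL ℂ (z j)) x := (innerSL ℂ (z j)).hasFDerivAt
        exact (h2.const_mul ((α : ℂ))).sub_const _
      exact (h1.cexp).const_mul (c j)
    have hnormf' : ∀ (j : ℕ), ∀ x ∈ ball (0 : EuclideanSpace ℂ (Fin n)) R,
        ‖f' j x‖ ≤ (M * Real.exp (α * R ^ 2) * α * (1 + 8/α))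
          * Real.exp (-(α/8) * dist 0 (z j) ^ 2) := by
      intro j x hx
      have hxR : ‖x‖ ≤ R := by
        rw [mem_ball, dist_zero_right] at hx
        exact hx.le
      have h3 : ‖f' j x‖ ≤ ‖g j x‖ * (α * ‖z j‖) := by
        rw [hf', hg]
        simp only
        refine le_trans (ContinuousLinearMap.opNorm_smul_le _ _) ?_
        rw [norm_mul, mul_assoc]
        refine mul_le_mul_of_nonneg_left ?_ (norm_nonneg _)
        refine le_trans (ContinuousLinearMap.opNorm_smul_le _ _) ?_
        refine mul_le_mul_of_nonneg_left ?_ (norm_nonneg _)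
        refine le_trans (ContinuousLinearMap.opNorm_smul_le _ _) ?_
        rw [innerSL_apply_norm, Complex.norm_real, Real.norm_eq_abs, abs_of_pos hα]
      have hz : ‖z j‖ = dist 0 (z j) := by simp
      calc ‖f' j x‖ ≤ ‖g j x‖ * (α * ‖z j‖) := h3
        _ ≤ (M * Real.exp (α * R ^ 2) * Real.exp (-(α/4) * dist 0 (z j) ^ 2))
            * (α * ‖z j‖) := by
            apply mul_le_mul_of_nonneg_right (hterm R x hxR j) (by positivity)
        _ = (M * Real.exp (α * R ^ 2) * α)
            * (dist 0 (z j) * Real.exp (-(α/4) * dist 0 (z j) ^ 2)) := by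
            rw [hz]; ring
        _ ≤ (M * Real.exp (α * R ^ 2) * α)
            * ((1 + 8/α) * Real.exp (-(α/8) * dist 0 (z j) ^ 2)) := by
            apply mul_le_mul_of_nonneg_left (linear_gaussian_bound hα dist_nonneg)
            positivity
        _ = (M * Real.exp (α * R ^ 2) * α * (1 + 8/α))
            * Real.exp (-(α/8) * dist 0 (z j) ^ 2) := by ring
    have hx0mem : x0 ∈ ball (0 : EuclideanSpace ℂ (Fin n)) R := by
      rw [mem_ball, dist_zero_right, hR]
      linarith
    have hsum0 : Summable fun j => g j x0 := (hptsum x0).of_norm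
    exact (hasFDerivAt_tsum_of_isPreconnected
      (((hS3 0).1).mul_left (M * Real.exp (α * R ^ 2) * α * (1 + 8/α)))
      isOpen_ball (convex_ball _ _).isPreconnected hderiv hnormf'
      hx0mem hsum0 hx0mem).differentiableAt
  · -- uniform convergence on compacts
    intro K hK
    obtain ⟨R0, hR0⟩ := hK.isBounded.subset_closedBall 0
    exact tendstoUniformlyOn_tsum_nat
      (((hS2 0).1).mul_left (M * Real.exp (α * (max R0 0) ^ 2)))
      (fun j x hx => hterm (max R0 0) x
        (by
          have := hR0 hx
          rw [mem_closedBall, dist_zero_right] at this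
          exact this.trans (le_max_left _ _)) j)
  · -- growth bound
    intro x
    have h1 : ‖∑' j, g j x‖ ≤ ∑' j, ‖g j x‖ := norm_tsum_le_tsum_norm (hptsum x)
    have h2 : ∑' j, ‖g j x‖ ≤ M * Real.exp (α * ‖x‖ ^ 2 / 2) * C1 := by
      calc ∑' j, ‖g j x‖
          ≤ ∑' j, M * Real.exp (α * ‖x‖ ^ 2 / 2) * Real.exp (-(α/2) * dist x (z j) ^ 2) :=
            (hptsum x).tsum_le_tsum (fun j => hbound j x)
              (((hS1 x).1).mul_left _)
        _ = M * Real.exp (α * ‖x‖ ^ 2 / 2)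
            * ∑' j, Real.exp (-(α/2) * dist x (z j) ^ 2) := tsum_mul_left
        _ ≤ M * Real.exp (α * ‖x‖ ^ 2 / 2) * C1 :=
            mul_le_mul_of_nonneg_left (hS1 x).2 (by positivity)
    calc ‖∑' j, g j x‖ * Real.exp (-α * ‖x‖ ^ 2 / 2)
        ≤ (M * Real.exp (α * ‖x‖ ^ 2 / 2) * C1) * Real.exp (-α * ‖x‖ ^ 2 / 2) :=
          mul_le_mul_of_nonneg_right (h1.trans h2) (Real.exp_pos _).le
      _ = C1 * M * (Real.exp (α * ‖x‖ ^ 2 / 2) * Real.exp (-α * ‖x‖ ^ 2 / 2)) := by ring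
      _ = C1 * M := by
          rw [← Real.exp_add, show α * ‖x‖ ^ 2 / 2 + -α * ‖x‖ ^ 2 / 2 = 0 by ring,
            Real.exp_zero, mul_one]
end
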